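/- Let B ∈ ℝ^{m×m} be symmetric positive definite, let s ∈ ℝ^m with s ≠ 0, and let y ∈ ℝ^m. Define θ = 1 if y^⊤s ≥ 0.2·s^⊤Bs, and θ = 0.8·s^⊤Bs / (s^⊤Bs − y^⊤s) otherwise; set r = θ·y + (1 − θ)·Bs. Then the damped BFGS update B' = B − (Bs)(Bs)^⊤ / (s^⊤Bs) + r r^⊤ / (s^⊤s) is symmetric positive definite; i.e., the update rule of the algorithm preserves symmetric positive definiteness of the quasi-Newton matrices. -/

import Mathlib

open Matrix

private lemma vecMulVec_mulVec' {m : ℕ} (u v x : Fin m → ℝ) :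
    (vecMulVec u v) *ᵥ x = (v ⬝ᵥ x) • u := by
  funext i
  simp [vecMulVec_apply, mulVec, dotProduct, Finset.mul_sum, Finset.sum_mul, mul_assoc,
    mul_comm, mul_left_comm]

private lemma symm_dot {m : ℕ} {B : Matrix (Fin m) (Fin m) ℝ} (hB : B.IsHermitian)
    (a b : Fin m → ℝ) : a ⬝ᵥ B *ᵥ b = b ⬝ᵥ B *ᵥ a := by
  have hBT : Bᵀ = B := by
    ext i j
    simpa using (hB.apply j i).symm
  rw [dotProduct_mulVec, ← mulVec_transpose, hBT, dotProduct_comm]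

theorem damped_bfgs_preserves_posDef (m : ℕ) (B : Matrix (Fin m) (Fin m) ℝ)
    (hB : B.PosDef) (s : Fin m → ℝ) (hs : s ≠ 0) (y : Fin m → ℝ)
    (θ : ℝ)
    (hθ : θ = if y ⬝ᵥ s ≥ 0.2 * (s ⬝ᵥ B.mulVec s) then 1
      else 0.8 * (s ⬝ᵥ B.mulVec s) / (s ⬝ᵥ B.mulVec s - y ⬝ᵥ s))
    (r : Fin m → ℝ) (hr : r = θ • y + (1 - θ) • B.mulVec s) :
    (B - (s ⬝ᵥ B.mulVec s)⁻¹ • vecMulVec (B.mulVec s) (B.mulVec s)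
      + (s ⬝ᵥ s)⁻¹ • vecMulVec r r).PosDef := by
  have hBH : B.IsHermitian := hB.1
  set a : ℝ := s ⬝ᵥ B.mulVec s with ha
  have hapos : 0 < a := by
    have := hB.dotProduct_mulVec_pos hs
    simpa using this
  have hss : 0 < s ⬝ᵥ s := by
    have h0 : s ⬝ᵥ s ≠ 0 := fun h => hs (dotProduct_self_eq_zero.mp h)
    have h1 : 0 ≤ s ⬝ᵥ s := by simpa using dotProduct_self_star_nonneg s
    exact lt_of_le_of_ne h1 (Ne.symm h0)
  -- key fact: r ⬝ᵥ s ≥ 0.2 * a > 0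
  have hrs : 0.2 * a ≤ r ⬝ᵥ s := by
    have hBss : B.mulVec s ⬝ᵥ s = a := by rw [dotProduct_comm]
    rw [hr]
    simp only [add_dotProduct, smul_dotProduct, smul_eq_mul, hBss]
    by_cases hcase : y ⬝ᵥ s ≥ 0.2 * a
    · rw [hθ, if_pos hcase]; linarith
    · push_neg at hcase
      have hd : 0 < a - y ⬝ᵥ s := by linarith
      have hθd : θ * (a - y ⬝ᵥ s) = 0.8 * a := by
        rw [hθ, if_neg (not_le.mpr hcase)]
        field_simp
      nlinarith [hθd]
  have hrspos : 0 < r ⬝ᵥ s := lt_of_lt_of_le (by linarith) hrs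
  refine posDef_iff_dotProduct_mulVec.mpr ⟨?_, ?_⟩
  · -- Hermitian
    ext i j
    simp only [conjTranspose_apply, Matrix.add_apply, Matrix.sub_apply, Matrix.smul_apply, vecMulVec_apply,
      smul_eq_mul, star_trivial]
    rw [show B j i = B i j from by simpa using hBH.apply i j]
    ring
  · intro x hx
    simp only [star_trivial]
    set p : ℝ := x ⬝ᵥ B.mulVec s with hp
    set z : Fin m → ℝ := x - (p / a) • s with hz
    have hzq : z ⬝ᵥ B *ᵥ z = x ⬝ᵥ B *ᵥ x - p ^ 2 / a := by
      have hsx : s ⬝ᵥ B *ᵥ x = p := symm_dot hBH s x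
      rw [hz]
      rw [mulVec_sub, mulVec_smul, sub_dotProduct, dotProduct_sub, dotProduct_sub,
        dotProduct_smul, smul_dotProduct, smul_dotProduct, dotProduct_smul]
      simp only [smul_eq_mul, hsx, ← hp, ← ha]
      field_simp
      ring
    -- expand quadratic form
    have hquad : x ⬝ᵥ (B - a⁻¹ • vecMulVec (B.mulVec s) (B.mulVec s)
        + (s ⬝ᵥ s)⁻¹ • vecMulVec r r) *ᵥ x
        = (x ⬝ᵥ B *ᵥ x - p ^ 2 / a) + (r ⬝ᵥ x) ^ 2 / (s ⬝ᵥ s) := by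
      rw [add_mulVec, sub_mulVec, smul_mulVec, smul_mulVec,
        vecMulVec_mulVec', vecMulVec_mulVec', dotProduct_add, dotProduct_sub,
        dotProduct_smul, dotProduct_smul, dotProduct_smul, dotProduct_smul]
      have hBsx : B.mulVec s ⬝ᵥ x = p := by rw [dotProduct_comm]
      have hxr : x ⬝ᵥ r = r ⬝ᵥ x := dotProduct_comm x r
      simp only [smul_eq_mul, hBsx, hxr, ← hp]
      field_simp
    rw [hquad, ← hzq]
    by_cases hzz : z = 0
    · -- x = (p/a) • s with p/a ≠ 0
      have hxps : x = (p / a) • s := by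
        have := sub_eq_zero.mp (hz ▸ hzz)
        exact this
      have hpa : p / a ≠ 0 := by
        intro h
        apply hx
        rw [hxps, h, zero_smul]
      have hrx : r ⬝ᵥ x = (p / a) * (r ⬝ᵥ s) := by
        rw [hxps, dotProduct_smul, smul_eq_mul]
      have : 0 < (r ⬝ᵥ x) ^ 2 / (s ⬝ᵥ s) := by
        apply div_pos _ hss
        rw [hrx]
        positivity
      have hzq0 : z ⬝ᵥ B *ᵥ z = 0 := by rw [hzz]; simp
      rw [hzq0]; linarith
    · have h1 : 0 < z ⬝ᵥ B *ᵥ z := by simpa using hB.dotProduct_mulVec_pos hzz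
      have h2 : 0 ≤ (r ⬝ᵥ x) ^ 2 / (s ⬝ᵥ s) := by positivity
      linarith
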